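/- Let sl(2,ℂ) be the Lie algebra of traceless 2×2 complex matrices and κ its Killing form. Let μ : sl(2,ℂ)³ → sl(2,ℂ) be any totally symmetric trilinear map that is equivariant for the adjoint action, i.e. ⁅x, μ(y₁,y₂,y₃)⁆ = μ(⁅x,y₁⁆,y₂,y₃) + μ(y₁,⁅x,y₂⁆,y₃) + μ(y₁,y₂,⁅x,y₃⁆) for all x,yᵢ ∈ sl(2,ℂ). Then there exists a scalar t ∈ ℂ such that μ(x,y,z) = t(κ(x,y)z + κ(y,z)x + κ(z,x)y) for all x,y,z; moreover every map of this form satisfies the identity J4: ⁅μ(y₂,y₃,y₄),y₁⁆ + ⁅μ(y₁,y₃,y₄),y₂⁆ + ⁅μ(y₁,y₂,y₄),y₃⁆ + ⁅μ(y₁,y₂,y₃),y₄⁆ = 0 for all y₁,…,y₄ ∈ sl(2,ℂ). (This is case 1 of Theorem 3.1: the unique, up to scale, Lie algebra of order 3 structure on sl(2,ℂ) ⊕ ad sl(2,ℂ).) -/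

import Mathlib

/-- The Lie algebra `sl(2,ℂ)` of traceless `2×2` complex matrices. -/
abbrev sl2C : Type := ↥(LieAlgebra.SpecialLinear.sl (Fin 2) ℂ)

namespace Sl2Aux

open LieAlgebra.SpecialLinear Matrix

lemma mem_sl2 (A : Matrix (Fin 2) (Fin 2) ℂ) (h : Matrix.trace A = 0) :
    A ∈ LieAlgebra.SpecialLinear.sl (Fin 2) ℂ := h

noncomputable def sE : sl2C := ⟨!![0,1;0,0], mem_sl2 _ (by simp [Matrix.trace_fin_two])⟩
noncomputable def sF : sl2C := ⟨!![0,0;1,0], mem_sl2 _ (by simp [Matrix.trace_fin_two])⟩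
noncomputable def sH : sl2C := ⟨!![1,0;0,-1], mem_sl2 _ (by simp [Matrix.trace_fin_two])⟩

/-- coordinates -/
noncomputable def cA (v : sl2C) : ℂ := v.val 0 1
noncomputable def cB (v : sl2C) : ℂ := v.val 1 0
noncomputable def cC (v : sl2C) : ℂ := v.val 0 0

@[simp] lemma cA_add (u v : sl2C) : cA (u + v) = cA u + cA v := rfl
@[simp] lemma cB_add (u v : sl2C) : cB (u + v) = cB u + cB v := rfl
@[simp] lemma cC_add (u v : sl2C) : cC (u + v) = cC u + cC v := rfl
@[simp] lemma cA_smul (a : ℂ) (v : sl2C) : cA (a • v) = a * cA v := rfl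
@[simp] lemma cB_smul (a : ℂ) (v : sl2C) : cB (a • v) = a * cB v := rfl
@[simp] lemma cC_smul (a : ℂ) (v : sl2C) : cC (a • v) = a * cC v := rfl
@[simp] lemma cA_zero : cA 0 = 0 := rfl
@[simp] lemma cB_zero : cB 0 = 0 := rfl
@[simp] lemma cC_zero : cC 0 = 0 := rfl
@[simp] lemma cA_neg (v : sl2C) : cA (-v) = -cA v := rfl
@[simp] lemma cB_neg (v : sl2C) : cB (-v) = -cB v := rfl
@[simp] lemma cC_neg (v : sl2C) : cC (-v) = -cC v := rfl
@[simp] lemma cA_E : cA sE = 1 := rfl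
@[simp] lemma cB_E : cB sE = 0 := rfl
@[simp] lemma cC_E : cC sE = 0 := rfl
@[simp] lemma cA_F : cA sF = 0 := rfl
@[simp] lemma cB_F : cB sF = 1 := rfl
@[simp] lemma cC_F : cC sF = 0 := rfl
@[simp] lemma cA_H : cA sH = 0 := rfl
@[simp] lemma cB_H : cB sH = 0 := rfl
@[simp] lemma cC_H : cC sH = 1 := rfl

lemma decomp (v : sl2C) : v = cA v • sE + cB v • sF + cC v • sH := by
  have ht : v.val 0 0 + v.val 1 1 = 0 := by
    have h2 : Matrix.trace v.val = 0 := v.2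
    rwa [Matrix.trace_fin_two] at h2
  apply Subtype.ext
  show v.val = _
  have : ((cA v • sE + cB v • sF + cC v • sH : sl2C) : Matrix (Fin 2) (Fin 2) ℂ)
      = cA v • sE.val + cB v • sF.val + cC v • sH.val := rfl
  rw [this]
  ext i j
  fin_cases i <;> fin_cases j <;>
    simp [sE, sF, sH, cA, cB, cC] <;> linear_combination ht

lemma ext3 {u v : sl2C} (h1 : cA u = cA v) (h2 : cB u = cB v) (h3 : cC u = cC v) : u = v := by
  rw [decomp u, decomp v, h1, h2, h3]

lemma hHE : ⁅sH, sE⁆ = (2:ℂ) • sE := by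
  apply Subtype.ext
  show sH.val * sE.val - sE.val * sH.val = (2:ℂ) • sE.val
  ext i j; fin_cases i <;> fin_cases j <;>
    norm_num [sE, sH, Matrix.mul_apply, Fin.sum_univ_two]

lemma hHF : ⁅sH, sF⁆ = (-2:ℂ) • sF := by
  apply Subtype.ext
  show sH.val * sF.val - sF.val * sH.val = (-2:ℂ) • sF.val
  ext i j; fin_cases i <;> fin_cases j <;>
    norm_num [sF, sH, Matrix.mul_apply, Fin.sum_univ_two]

lemma hEF : ⁅sE, sF⁆ = sH := by
  apply Subtype.ext
  show sE.val * sF.val - sF.val * sE.val = sH.val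
  ext i j; fin_cases i <;> fin_cases j <;>
    norm_num [sE, sF, sH, Matrix.mul_apply, Fin.sum_univ_two]

lemma hEH : ⁅sE, sH⁆ = (-2:ℂ) • sE := by
  rw [← lie_skew, hHE]; module

lemma hFH : ⁅sF, sH⁆ = (2:ℂ) • sF := by
  rw [← lie_skew, hHF]; module

lemma hFE : ⁅sF, sE⁆ = -sH := by
  rw [← lie_skew, hEF]


noncomputable def coordEquiv : sl2C ≃ₗ[ℂ] (Fin 3 → ℂ) where
  toFun v := ![cA v, cB v, cC v]
  map_add' u v := by funext i; fin_cases i <;> simp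
  map_smul' a v := by funext i; fin_cases i <;> simp
  invFun c := c 0 • sE + c 1 • sF + c 2 • sH
  left_inv v := by
    show (![cA v, cB v, cC v] 0) • sE + (![cA v, cB v, cC v] 1) • sF
        + (![cA v, cB v, cC v] 2) • sH = v
    simpa using (decomp v).symm
  right_inv c := by
    funext i
    show ![cA _, cB _, cC _] i = c i
    fin_cases i <;> simp

noncomputable def bas : Module.Basis (Fin 3) ℂ sl2C := Module.Basis.ofEquivFun coordEquiv

lemma bas0 : bas 0 = sE := by
  rw [bas, Module.Basis.coe_ofEquivFun]
  show (Pi.single 0 1 : Fin 3 → ℂ) 0 • sE + (Pi.single 0 1 : Fin 3 → ℂ) 1 • sF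
      + (Pi.single 0 1 : Fin 3 → ℂ) 2 • sH = sE
  simp

lemma bas1 : bas 1 = sF := by
  rw [bas, Module.Basis.coe_ofEquivFun]
  show (Pi.single 1 1 : Fin 3 → ℂ) 0 • sE + (Pi.single 1 1 : Fin 3 → ℂ) 1 • sF
      + (Pi.single 1 1 : Fin 3 → ℂ) 2 • sH = sF
  simp

lemma bas2 : bas 2 = sH := by
  rw [bas, Module.Basis.coe_ofEquivFun]
  show (Pi.single 2 1 : Fin 3 → ℂ) 0 • sE + (Pi.single 2 1 : Fin 3 → ℂ) 1 • sF
      + (Pi.single 2 1 : Fin 3 → ℂ) 2 • sH = sH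
  simp

lemma repr_apply (x : sl2C) (i : Fin 3) : bas.repr x i = ![cA x, cB x, cC x] i :=
  Module.Basis.ofEquivFun_repr_apply _ _ _

lemma killing_eq (x y : sl2C) : killingForm ℂ sl2C x y =
    cA ⁅x, ⁅y, sE⁆⁆ + cB ⁅x, ⁅y, sF⁆⁆ + cC ⁅x, ⁅y, sH⁆⁆ := by
  rw [killingForm_apply_apply, LinearMap.trace_eq_matrix_trace ℂ bas,
    Matrix.trace_fin_three]
  simp [LinearMap.toMatrix_apply, repr_apply, bas0, bas1, bas2, LieAlgebra.ad_apply]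


lemma kEE : killingForm ℂ sl2C sE sE = 0 := by
  simp [killing_eq, hEF, hEH, hHE, hFE, hFH, hHF, lie_self, lie_smul, lie_neg]

lemma kFF : killingForm ℂ sl2C sF sF = 0 := by
  simp [killing_eq, hEF, hEH, hHE, hFE, hFH, hHF, lie_self, lie_smul, lie_neg]

lemma kHH : killingForm ℂ sl2C sH sH = 8 := by
  simp [killing_eq, hEF, hEH, hHE, hFE, hFH, hHF, lie_self, lie_smul, lie_neg]
  norm_num

lemma kEF : killingForm ℂ sl2C sE sF = 4 := by
  simp [killing_eq, hEF, hEH, hHE, hFE, hFH, hHF, lie_self, lie_smul, lie_neg]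
  norm_num

lemma kFE : killingForm ℂ sl2C sF sE = 4 := by
  simp [killing_eq, hEF, hEH, hHE, hFE, hFH, hHF, lie_self, lie_smul, lie_neg]
  norm_num

lemma kEH : killingForm ℂ sl2C sE sH = 0 := by
  simp [killing_eq, hEF, hEH, hHE, hFE, hFH, hHF, lie_self, lie_smul, lie_neg]

lemma kHE : killingForm ℂ sl2C sH sE = 0 := by
  simp [killing_eq, hEF, hEH, hHE, hFE, hFH, hHF, lie_self, lie_smul, lie_neg]

lemma kFH : killingForm ℂ sl2C sF sH = 0 := by
  simp [killing_eq, hEF, hEH, hHE, hFE, hFH, hHF, lie_self, lie_smul, lie_neg]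

lemma kHF : killingForm ℂ sl2C sH sF = 0 := by
  simp [killing_eq, hEF, hEH, hHE, hFE, hFH, hHF, lie_self, lie_smul, lie_neg]

lemma killing_formula (x y : sl2C) : killingForm ℂ sl2C x y =
    4 * (cA x * cB y + cB x * cA y) + 8 * (cC x * cC y) := by
  conv_lhs => rw [decomp x, decomp y]
  simp only [map_add, _root_.map_smul, LinearMap.add_apply, LinearMap.smul_apply,
    kEE, kFF, kHH, kEF, kFE, kEH, kHE, kFH, kHF, smul_eq_mul]
  ring

end Sl2Aux

open Sl2Aux in
lemma J4_lemma (t : ℂ) (y₁ y₂ y₃ y₄ : sl2C) :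
      ⁅t • (killingForm ℂ sl2C y₂ y₃ • y₄ + killingForm ℂ sl2C y₃ y₄ • y₂ +
        killingForm ℂ sl2C y₄ y₂ • y₃), y₁⁆ +
      ⁅t • (killingForm ℂ sl2C y₁ y₃ • y₄ + killingForm ℂ sl2C y₃ y₄ • y₁ +
        killingForm ℂ sl2C y₄ y₁ • y₃), y₂⁆ +
      ⁅t • (killingForm ℂ sl2C y₁ y₂ • y₄ + killingForm ℂ sl2C y₂ y₄ • y₁ +
        killingForm ℂ sl2C y₄ y₁ • y₂), y₃⁆ +
      ⁅t • (killingForm ℂ sl2C y₁ y₂ • y₃ + killingForm ℂ sl2C y₂ y₃ • y₁ +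
        killingForm ℂ sl2C y₃ y₁ • y₂), y₄⁆ = 0 := by
  have kc : ∀ u v : sl2C, killingForm ℂ sl2C u v = killingForm ℂ sl2C v u :=
    fun u v => LieModule.traceForm_comm ℂ sl2C sl2C u v
  have sk : ∀ u v : sl2C, ⁅u, v⁆ = -⁅v, u⁆ := fun u v => (lie_skew u v).symm
  simp only [smul_lie, add_lie]
  rw [kc y₄ y₂, kc y₄ y₁, kc y₃ y₁]
  rw [sk y₄ y₁, sk y₂ y₁, sk y₃ y₁, sk y₄ y₂, sk y₃ y₂, sk y₄ y₃]
  module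

set_option maxHeartbeats 2000000
open Sl2Aux

/-- Any totally symmetric trilinear map `μ : sl(2,ℂ)³ → sl(2,ℂ)` which is equivariant for
the adjoint action (identity J3) is of the form
`μ(x,y,z) = t(κ(x,y)z + κ(y,z)x + κ(z,x)y)` with `κ` the Killing form, for some `t ∈ ℂ`;
moreover every map of this form satisfies the identity J4.  (Case 1 of Theorem 3.1: the
unique, up to scale, Lie algebra of order 3 structure on `sl(2,ℂ) ⊕ ad sl(2,ℂ)`.) -/
theorem sl2_adjoint_order3_classification
    (μ : sl2C → sl2C → sl2C → sl2C)
    (hadd : ∀ x x' y z, μ (x + x') y z = μ x y z + μ x' y z)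
    (hsmul : ∀ (a : ℂ) (x y z), μ (a • x) y z = a • μ x y z)
    (hsymm₁ : ∀ x y z, μ x y z = μ y x z)
    (hsymm₂ : ∀ x y z, μ x y z = μ x z y)
    (hJ3 : ∀ (x y₁ y₂ y₃ : sl2C), ⁅x, μ y₁ y₂ y₃⁆ =
      μ ⁅x, y₁⁆ y₂ y₃ + μ y₁ ⁅x, y₂⁆ y₃ + μ y₁ y₂ ⁅x, y₃⁆) :
    (∃ t : ℂ, ∀ x y z : sl2C,
      μ x y z = t • (killingForm ℂ sl2C x y • z + killingForm ℂ sl2C y z • x +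
        killingForm ℂ sl2C z x • y)) ∧
    (∀ t : ℂ, ∀ y₁ y₂ y₃ y₄ : sl2C,
      ⁅t • (killingForm ℂ sl2C y₂ y₃ • y₄ + killingForm ℂ sl2C y₃ y₄ • y₂ +
        killingForm ℂ sl2C y₄ y₂ • y₃), y₁⁆ +
      ⁅t • (killingForm ℂ sl2C y₁ y₃ • y₄ + killingForm ℂ sl2C y₃ y₄ • y₁ +
        killingForm ℂ sl2C y₄ y₁ • y₃), y₂⁆ +
      ⁅t • (killingForm ℂ sl2C y₁ y₂ • y₄ + killingForm ℂ sl2C y₂ y₄ • y₁ +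
        killingForm ℂ sl2C y₄ y₁ • y₂), y₃⁆ +
      ⁅t • (killingForm ℂ sl2C y₁ y₂ • y₃ + killingForm ℂ sl2C y₂ y₃ • y₁ +
        killingForm ℂ sl2C y₃ y₁ • y₂), y₄⁆ = 0) := by
  constructor
  · -- linearity in all slots
    have hsmul₂ : ∀ (a : ℂ) (x y z), μ x (a • y) z = a • μ x y z := fun a x y z => by
      rw [hsymm₁, hsmul, hsymm₁]
    have hsmul₃ : ∀ (a : ℂ) (x y z), μ x y (a • z) = a • μ x y z := fun a x y z => by
      rw [hsymm₂, hsmul₂, hsymm₂]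
    have hadd₂ : ∀ x y y' z, μ x (y + y') z = μ x y z + μ x y' z := fun x y y' z => by
      rw [hsymm₁, hadd, hsymm₁, hsymm₁ y']
    have hadd₃ : ∀ x y z z', μ x y (z + z') = μ x y z + μ x y z' := fun x y z z' => by
      rw [hsymm₂, hadd₂, hsymm₂, hsymm₂ x z']
    have h0 : ∀ y z, μ 0 y z = 0 := fun y z => by simpa using hsmul 0 0 y z
    have h0₂ : ∀ x z, μ x 0 z = 0 := fun x z => by rw [hsymm₁, h0]
    have h0₃ : ∀ x y, μ x y 0 = 0 := fun x y => by rw [hsymm₂, h0₂]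
    have hneg₁ : ∀ x y z, μ (-x) y z = -μ x y z := fun x y z => by
      simpa using hsmul (-1) x y z
    have hneg₂ : ∀ x y z, μ x (-y) z = -μ x y z := fun x y z => by
      rw [hsymm₁, hneg₁, hsymm₁]
    -- coordinates of the ten basis values
    obtain ⟨p1, p2, p3, hv1⟩ : ∃ p q r, μ sE sE sE = p • sE + q • sF + r • sH :=
      ⟨_, _, _, decomp _⟩
    obtain ⟨q1, q2, q3, hv2⟩ : ∃ p q r, μ sE sE sF = p • sE + q • sF + r • sH :=
      ⟨_, _, _, decomp _⟩
    obtain ⟨r1, r2, r3, hv3⟩ : ∃ p q r, μ sE sE sH = p • sE + q • sF + r • sH :=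
      ⟨_, _, _, decomp _⟩
    obtain ⟨s1, s2, s3, hv4⟩ : ∃ p q r, μ sE sF sF = p • sE + q • sF + r • sH :=
      ⟨_, _, _, decomp _⟩
    obtain ⟨u1, u2, u3, hv5⟩ : ∃ p q r, μ sE sF sH = p • sE + q • sF + r • sH :=
      ⟨_, _, _, decomp _⟩
    obtain ⟨w1, w2, w3, hv6⟩ : ∃ p q r, μ sE sH sH = p • sE + q • sF + r • sH :=
      ⟨_, _, _, decomp _⟩
    obtain ⟨m1, m2, m3, hv7⟩ : ∃ p q r, μ sF sF sF = p • sE + q • sF + r • sH :=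
      ⟨_, _, _, decomp _⟩
    obtain ⟨n1, n2, n3, hv8⟩ : ∃ p q r, μ sF sF sH = p • sE + q • sF + r • sH :=
      ⟨_, _, _, decomp _⟩
    obtain ⟨o1, o2, o3, hv9⟩ : ∃ p q r, μ sF sH sH = p • sE + q • sF + r • sH :=
      ⟨_, _, _, decomp _⟩
    obtain ⟨z1, z2, z3, hv10⟩ : ∃ p q r, μ sH sH sH = p • sE + q • sF + r • sH :=
      ⟨_, _, _, decomp _⟩
    have e := hJ3 sH sE sE sE
    rw [hHE] at e
    simp only [hsmul, hsmul₂, hsmul₃, lie_self, h0, h0₂, h0₃] at e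
    rw [hv1] at e
    simp only [lie_add, lie_smul, hHE, hHF, lie_self, smul_zero, add_zero, zero_add] at e
    have ec := congrArg cA e
    simp only [cA_add, cB_add, cC_add, cA_smul, cB_smul, cC_smul, cA_E, cB_E, cC_E, cA_F, cB_F, cC_F, cA_H, cB_H, cC_H, cA_zero, cB_zero, cC_zero, mul_zero, mul_one, add_zero, zero_add, cA_neg, cB_neg, cC_neg] at ec
    have hp1 : p1 = 0 := by linear_combination (-1/4 : ℂ) * ec
    clear ec
    have ec := congrArg cB e
    simp only [cA_add, cB_add, cC_add, cA_smul, cB_smul, cC_smul, cA_E, cB_E, cC_E, cA_F, cB_F, cC_F, cA_H, cB_H, cC_H, cA_zero, cB_zero, cC_zero, mul_zero, mul_one, add_zero, zero_add, cA_neg, cB_neg, cC_neg] at ec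
    have hp2 : p2 = 0 := by linear_combination (-1/8 : ℂ) * ec
    clear ec
    have ec := congrArg cC e
    simp only [cA_add, cB_add, cC_add, cA_smul, cB_smul, cC_smul, cA_E, cB_E, cC_E, cA_F, cB_F, cC_F, cA_H, cB_H, cC_H, cA_zero, cB_zero, cC_zero, mul_zero, mul_one, add_zero, zero_add, cA_neg, cB_neg, cC_neg] at ec
    have hp3 : p3 = 0 := by linear_combination (-1/6 : ℂ) * ec
    clear ec
    clear e
    have e := hJ3 sH sE sE sF
    rw [hHE, hHF] at e
    simp only [hsmul, hsmul₂, hsmul₃, lie_self, h0, h0₂, h0₃] at e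
    rw [hv2] at e
    simp only [lie_add, lie_smul, hHE, hHF, lie_self, smul_zero, add_zero, zero_add] at e
    have ec := congrArg cB e
    simp only [cA_add, cB_add, cC_add, cA_smul, cB_smul, cC_smul, cA_E, cB_E, cC_E, cA_F, cB_F, cC_F, cA_H, cB_H, cC_H, cA_zero, cB_zero, cC_zero, mul_zero, mul_one, add_zero, zero_add, cA_neg, cB_neg, cC_neg] at ec
    have hq2 : q2 = 0 := by linear_combination (-1/4 : ℂ) * ec
    clear ec
    have ec := congrArg cC e
    simp only [cA_add, cB_add, cC_add, cA_smul, cB_smul, cC_smul, cA_E, cB_E, cC_E, cA_F, cB_F, cC_F, cA_H, cB_H, cC_H, cA_zero, cB_zero, cC_zero, mul_zero, mul_one, add_zero, zero_add, cA_neg, cB_neg, cC_neg] at ec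
    have hq3 : q3 = 0 := by linear_combination (-1/2 : ℂ) * ec
    clear ec
    clear e
    have e := hJ3 sH sE sE sH
    rw [hHE] at e
    simp only [hsmul, hsmul₂, hsmul₃, lie_self, h0, h0₂, h0₃] at e
    rw [hv3] at e
    simp only [lie_add, lie_smul, hHE, hHF, lie_self, smul_zero, add_zero, zero_add] at e
    have ec := congrArg cA e
    simp only [cA_add, cB_add, cC_add, cA_smul, cB_smul, cC_smul, cA_E, cB_E, cC_E, cA_F, cB_F, cC_F, cA_H, cB_H, cC_H, cA_zero, cB_zero, cC_zero, mul_zero, mul_one, add_zero, zero_add, cA_neg, cB_neg, cC_neg] at ec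
    have hr1 : r1 = 0 := by linear_combination (-1/2 : ℂ) * ec
    clear ec
    have ec := congrArg cB e
    simp only [cA_add, cB_add, cC_add, cA_smul, cB_smul, cC_smul, cA_E, cB_E, cC_E, cA_F, cB_F, cC_F, cA_H, cB_H, cC_H, cA_zero, cB_zero, cC_zero, mul_zero, mul_one, add_zero, zero_add, cA_neg, cB_neg, cC_neg] at ec
    have hr2 : r2 = 0 := by linear_combination (-1/6 : ℂ) * ec
    clear ec
    have ec := congrArg cC e
    simp only [cA_add, cB_add, cC_add, cA_smul, cB_smul, cC_smul, cA_E, cB_E, cC_E, cA_F, cB_F, cC_F, cA_H, cB_H, cC_H, cA_zero, cB_zero, cC_zero, mul_zero, mul_one, add_zero, zero_add, cA_neg, cB_neg, cC_neg] at ec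
    have hr3 : r3 = 0 := by linear_combination (-1/4 : ℂ) * ec
    clear ec
    clear e
    have e := hJ3 sH sE sF sF
    rw [hHE, hHF] at e
    simp only [hsmul, hsmul₂, hsmul₃, lie_self, h0, h0₂, h0₃] at e
    rw [hv4] at e
    simp only [lie_add, lie_smul, hHE, hHF, lie_self, smul_zero, add_zero, zero_add] at e
    have ec := congrArg cA e
    simp only [cA_add, cB_add, cC_add, cA_smul, cB_smul, cC_smul, cA_E, cB_E, cC_E, cA_F, cB_F, cC_F, cA_H, cB_H, cC_H, cA_zero, cB_zero, cC_zero, mul_zero, mul_one, add_zero, zero_add, cA_neg, cB_neg, cC_neg] at ec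
    have hs1 : s1 = 0 := by linear_combination (1/4 : ℂ) * ec
    clear ec
    have ec := congrArg cC e
    simp only [cA_add, cB_add, cC_add, cA_smul, cB_smul, cC_smul, cA_E, cB_E, cC_E, cA_F, cB_F, cC_F, cA_H, cB_H, cC_H, cA_zero, cB_zero, cC_zero, mul_zero, mul_one, add_zero, zero_add, cA_neg, cB_neg, cC_neg] at ec
    have hs3 : s3 = 0 := by linear_combination (1/2 : ℂ) * ec
    clear ec
    clear e
    have e := hJ3 sH sE sF sH
    rw [hHE, hHF] at e
    simp only [hsmul, hsmul₂, hsmul₃, lie_self, h0, h0₂, h0₃] at e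
    rw [hv5] at e
    simp only [lie_add, lie_smul, hHE, hHF, lie_self, smul_zero, add_zero, zero_add] at e
    have ec := congrArg cA e
    simp only [cA_add, cB_add, cC_add, cA_smul, cB_smul, cC_smul, cA_E, cB_E, cC_E, cA_F, cB_F, cC_F, cA_H, cB_H, cC_H, cA_zero, cB_zero, cC_zero, mul_zero, mul_one, add_zero, zero_add, cA_neg, cB_neg, cC_neg] at ec
    have hu1 : u1 = 0 := by linear_combination (1/2 : ℂ) * ec
    clear ec
    have ec := congrArg cB e
    simp only [cA_add, cB_add, cC_add, cA_smul, cB_smul, cC_smul, cA_E, cB_E, cC_E, cA_F, cB_F, cC_F, cA_H, cB_H, cC_H, cA_zero, cB_zero, cC_zero, mul_zero, mul_one, add_zero, zero_add, cA_neg, cB_neg, cC_neg] at ec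
    have hu2 : u2 = 0 := by linear_combination (-1/2 : ℂ) * ec
    clear ec
    clear e
    have e := hJ3 sH sE sH sH
    rw [hHE] at e
    simp only [hsmul, hsmul₂, hsmul₃, lie_self, h0, h0₂, h0₃] at e
    rw [hv6] at e
    simp only [lie_add, lie_smul, hHE, hHF, lie_self, smul_zero, add_zero, zero_add] at e
    have ec := congrArg cB e
    simp only [cA_add, cB_add, cC_add, cA_smul, cB_smul, cC_smul, cA_E, cB_E, cC_E, cA_F, cB_F, cC_F, cA_H, cB_H, cC_H, cA_zero, cB_zero, cC_zero, mul_zero, mul_one, add_zero, zero_add, cA_neg, cB_neg, cC_neg] at ec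
    have hw2 : w2 = 0 := by linear_combination (-1/4 : ℂ) * ec
    clear ec
    have ec := congrArg cC e
    simp only [cA_add, cB_add, cC_add, cA_smul, cB_smul, cC_smul, cA_E, cB_E, cC_E, cA_F, cB_F, cC_F, cA_H, cB_H, cC_H, cA_zero, cB_zero, cC_zero, mul_zero, mul_one, add_zero, zero_add, cA_neg, cB_neg, cC_neg] at ec
    have hw3 : w3 = 0 := by linear_combination (-1/2 : ℂ) * ec
    clear ec
    clear e
    have e := hJ3 sH sF sF sF
    rw [hHF] at e
    simp only [hsmul, hsmul₂, hsmul₃, lie_self, h0, h0₂, h0₃] at e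
    rw [hv7] at e
    simp only [lie_add, lie_smul, hHE, hHF, lie_self, smul_zero, add_zero, zero_add] at e
    have ec := congrArg cA e
    simp only [cA_add, cB_add, cC_add, cA_smul, cB_smul, cC_smul, cA_E, cB_E, cC_E, cA_F, cB_F, cC_F, cA_H, cB_H, cC_H, cA_zero, cB_zero, cC_zero, mul_zero, mul_one, add_zero, zero_add, cA_neg, cB_neg, cC_neg] at ec
    have hm1 : m1 = 0 := by linear_combination (1/8 : ℂ) * ec
    clear ec
    have ec := congrArg cB e
    simp only [cA_add, cB_add, cC_add, cA_smul, cB_smul, cC_smul, cA_E, cB_E, cC_E, cA_F, cB_F, cC_F, cA_H, cB_H, cC_H, cA_zero, cB_zero, cC_zero, mul_zero, mul_one, add_zero, zero_add, cA_neg, cB_neg, cC_neg] at ec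
    have hm2 : m2 = 0 := by linear_combination (1/4 : ℂ) * ec
    clear ec
    have ec := congrArg cC e
    simp only [cA_add, cB_add, cC_add, cA_smul, cB_smul, cC_smul, cA_E, cB_E, cC_E, cA_F, cB_F, cC_F, cA_H, cB_H, cC_H, cA_zero, cB_zero, cC_zero, mul_zero, mul_one, add_zero, zero_add, cA_neg, cB_neg, cC_neg] at ec
    have hm3 : m3 = 0 := by linear_combination (1/6 : ℂ) * ec
    clear ec
    clear e
    have e := hJ3 sH sF sF sH
    rw [hHF] at e
    simp only [hsmul, hsmul₂, hsmul₃, lie_self, h0, h0₂, h0₃] at e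
    rw [hv8] at e
    simp only [lie_add, lie_smul, hHE, hHF, lie_self, smul_zero, add_zero, zero_add] at e
    have ec := congrArg cA e
    simp only [cA_add, cB_add, cC_add, cA_smul, cB_smul, cC_smul, cA_E, cB_E, cC_E, cA_F, cB_F, cC_F, cA_H, cB_H, cC_H, cA_zero, cB_zero, cC_zero, mul_zero, mul_one, add_zero, zero_add, cA_neg, cB_neg, cC_neg] at ec
    have hn1 : n1 = 0 := by linear_combination (1/6 : ℂ) * ec
    clear ec
    have ec := congrArg cB e
    simp only [cA_add, cB_add, cC_add, cA_smul, cB_smul, cC_smul, cA_E, cB_E, cC_E, cA_F, cB_F, cC_F, cA_H, cB_H, cC_H, cA_zero, cB_zero, cC_zero, mul_zero, mul_one, add_zero, zero_add, cA_neg, cB_neg, cC_neg] at ec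
    have hn2 : n2 = 0 := by linear_combination (1/2 : ℂ) * ec
    clear ec
    have ec := congrArg cC e
    simp only [cA_add, cB_add, cC_add, cA_smul, cB_smul, cC_smul, cA_E, cB_E, cC_E, cA_F, cB_F, cC_F, cA_H, cB_H, cC_H, cA_zero, cB_zero, cC_zero, mul_zero, mul_one, add_zero, zero_add, cA_neg, cB_neg, cC_neg] at ec
    have hn3 : n3 = 0 := by linear_combination (1/4 : ℂ) * ec
    clear ec
    clear e
    have e := hJ3 sH sF sH sH
    rw [hHF] at e
    simp only [hsmul, hsmul₂, hsmul₃, lie_self, h0, h0₂, h0₃] at e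
    rw [hv9] at e
    simp only [lie_add, lie_smul, hHE, hHF, lie_self, smul_zero, add_zero, zero_add] at e
    have ec := congrArg cA e
    simp only [cA_add, cB_add, cC_add, cA_smul, cB_smul, cC_smul, cA_E, cB_E, cC_E, cA_F, cB_F, cC_F, cA_H, cB_H, cC_H, cA_zero, cB_zero, cC_zero, mul_zero, mul_one, add_zero, zero_add, cA_neg, cB_neg, cC_neg] at ec
    have ho1 : o1 = 0 := by linear_combination (1/4 : ℂ) * ec
    clear ec
    have ec := congrArg cC e
    simp only [cA_add, cB_add, cC_add, cA_smul, cB_smul, cC_smul, cA_E, cB_E, cC_E, cA_F, cB_F, cC_F, cA_H, cB_H, cC_H, cA_zero, cB_zero, cC_zero, mul_zero, mul_one, add_zero, zero_add, cA_neg, cB_neg, cC_neg] at ec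
    have ho3 : o3 = 0 := by linear_combination (1/2 : ℂ) * ec
    clear ec
    clear e
    have e := hJ3 sH sH sH sH
    simp only [hsmul, hsmul₂, hsmul₃, lie_self, h0, h0₂, h0₃] at e
    rw [hv10] at e
    simp only [lie_add, lie_smul, hHE, hHF, lie_self, smul_zero, add_zero, zero_add] at e
    have ec := congrArg cA e
    simp only [cA_add, cB_add, cC_add, cA_smul, cB_smul, cC_smul, cA_E, cB_E, cC_E, cA_F, cB_F, cC_F, cA_H, cB_H, cC_H, cA_zero, cB_zero, cC_zero, mul_zero, mul_one, add_zero, zero_add, cA_neg, cB_neg, cC_neg] at ec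
    have hz1 : z1 = 0 := by linear_combination (1/2 : ℂ) * ec
    clear ec
    have ec := congrArg cB e
    simp only [cA_add, cB_add, cC_add, cA_smul, cB_smul, cC_smul, cA_E, cB_E, cC_E, cA_F, cB_F, cC_F, cA_H, cB_H, cC_H, cA_zero, cB_zero, cC_zero, mul_zero, mul_one, add_zero, zero_add, cA_neg, cB_neg, cC_neg] at ec
    have hz2 : z2 = 0 := by linear_combination (-1/2 : ℂ) * ec
    clear ec
    clear e
    -- x = sE on (H,H,H)
    have e := hJ3 sE sH sH sH
    rw [hEH] at e
    simp only [hsmul, hsmul₂, hsmul₃] at e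
    rw [hsymm₂ sH sH sE] at e
    rw [hsymm₁ sH sE sH] at e
    rw [hv10, hv6] at e
    simp only [lie_add, lie_smul, hEF, hEH, lie_self, smul_zero, add_zero, zero_add] at e
    have ec := congrArg cA e
    simp only [cA_add, cA_smul, cA_E, cA_F, cA_H, cA_zero, cA_neg,
      mul_zero, mul_one, add_zero, zero_add] at ec
    have f1 : z3 = 3*w1 := by linear_combination (-1/2 : ℂ) * ec
    clear ec e
    -- x = sE on (E,F,F)
    have e := hJ3 sE sE sF sF
    rw [hEF] at e
    simp only [lie_self, h0, hsmul, hsmul₂, hsmul₃] at e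
    rw [hsymm₂ sE sH sF] at e
    rw [hv4, hv5] at e
    simp only [lie_add, lie_smul, hEF, hEH, lie_self, smul_zero, add_zero, zero_add] at e
    have ec := congrArg cC e
    simp only [cC_add, cC_smul, cC_E, cC_F, cC_H, cC_zero, cC_neg,
      mul_zero, mul_one, add_zero, zero_add] at ec
    have hs2 : s2 = 2*u3 := by linear_combination (1 : ℂ) * ec
    clear ec e
    -- x = sF on (E,E,F)
    have e := hJ3 sF sE sE sF
    rw [hFE] at e
    simp only [lie_self, h0₃, hneg₁, hneg₂] at e
    rw [hsymm₁ sH sE sF] at e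
    rw [hsymm₂ sE sH sF] at e
    rw [hv2, hv5] at e
    simp only [lie_add, lie_smul, hFE, hFH, lie_self, smul_zero, add_zero, zero_add,
      smul_neg, lie_neg] at e
    have ec := congrArg cC e
    simp only [cC_add, cC_smul, cC_E, cC_F, cC_H, cC_zero, cC_neg,
      mul_zero, mul_one, add_zero, zero_add, neg_zero, neg_add_rev] at ec
    have hq1 : q1 = 2*u3 := by linear_combination (-1 : ℂ) * ec
    clear ec e
    -- x = sF on (E,H,H)
    have e := hJ3 sF sE sH sH
    rw [hFE, hFH] at e
    simp only [hneg₁, hsmul₂, hsmul₃] at e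
    rw [hsymm₂ sE sH sF] at e
    rw [hv10, hv5, hv6] at e
    simp only [lie_add, lie_smul, hFE, hFH, lie_self, smul_zero, add_zero, zero_add,
      smul_neg, lie_neg] at e
    have ec := congrArg cC e
    simp only [cC_add, cC_smul, cC_E, cC_F, cC_H, cC_zero, cC_neg,
      mul_zero, mul_one, add_zero, zero_add, neg_zero, neg_add_rev] at ec
    have f2 : w1 = z3 - 4*u3 := by linear_combination (-1 : ℂ) * ec
    clear ec e
    -- x = sE on (F,H,H)
    have e := hJ3 sE sF sH sH
    rw [hEF, hEH] at e
    simp only [hsmul₂, hsmul₃] at e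
    rw [hsymm₂ sF sH sE] at e
    rw [hsymm₁ sF sE sH] at e
    rw [hv9, hv10, hv5] at e
    simp only [lie_add, lie_smul, hEF, hEH, lie_self, smul_zero, add_zero, zero_add,
      smul_neg, lie_neg] at e
    have ec := congrArg cC e
    simp only [cC_add, cC_smul, cC_E, cC_F, cC_H, cC_zero, cC_neg,
      mul_zero, mul_one, add_zero, zero_add, neg_zero, neg_add_rev] at ec
    have f3 : o2 = z3 - 4*u3 := by linear_combination (1 : ℂ) * ec
    clear ec e
    -- solve the linear system
    have hw1 : w1 = 2*u3 := by linear_combination (-1/2 : ℂ) * f1 + (-1/2 : ℂ) * f2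
    have hz3 : z3 = 6*u3 := by linear_combination f1 + 3*hw1
    have ho2 : o2 = 2*u3 := by linear_combination f3 + hz3
    -- the ten sorted values
    have VEEE : μ sE sE sE = (0 : sl2C) := by rw [hv1, hp1, hp2, hp3]; module
    have VEEF : μ sE sE sF = (2*u3) • sE := by rw [hv2, hq1, hq2, hq3]; module
    have VEEH : μ sE sE sH = (0 : sl2C) := by rw [hv3, hr1, hr2, hr3]; module
    have VEFF : μ sE sF sF = (2*u3) • sF := by rw [hv4, hs1, hs2, hs3]; module
    have VEFH : μ sE sF sH = u3 • sH := by rw [hv5, hu1, hu2]; module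
    have VEHH : μ sE sH sH = (2*u3) • sE := by rw [hv6, hw1, hw2, hw3]; module
    have VFFF : μ sF sF sF = (0 : sl2C) := by rw [hv7, hm1, hm2, hm3]; module
    have VFFH : μ sF sF sH = (0 : sl2C) := by rw [hv8, hn1, hn2, hn3]; module
    have VFHH : μ sF sH sH = (2*u3) • sF := by rw [hv9, ho1, ho2, ho3]; module
    have VHHH : μ sH sH sH = (6*u3) • sH := by rw [hv10, hz1, hz2, hz3]; module

    have VEFE : μ sE sF sE = (2*u3) • sE := (hsymm₂ sE sF sE).trans (VEEF)
    have VEHE : μ sE sH sE = (0 : sl2C) := (hsymm₂ sE sH sE).trans (VEEH)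
    have VEHF : μ sE sH sF = u3 • sH := (hsymm₂ sE sH sF).trans (VEFH)
    have VFEE : μ sF sE sE = (2*u3) • sE := (hsymm₁ sF sE sE).trans ((hsymm₂ sE sF sE).trans (VEEF))
    have VFEF : μ sF sE sF = (2*u3) • sF := (hsymm₁ sF sE sF).trans (VEFF)
    have VFEH : μ sF sE sH = u3 • sH := (hsymm₁ sF sE sH).trans (VEFH)
    have VFFE : μ sF sF sE = (2*u3) • sF := (hsymm₂ sF sF sE).trans ((hsymm₁ sF sE sF).trans (VEFF))
    have VFHE : μ sF sH sE = u3 • sH := (hsymm₂ sF sH sE).trans ((hsymm₁ sF sE sH).trans (VEFH))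
    have VFHF : μ sF sH sF = (0 : sl2C) := (hsymm₂ sF sH sF).trans (VFFH)
    have VHEE : μ sH sE sE = (0 : sl2C) := (hsymm₁ sH sE sE).trans ((hsymm₂ sE sH sE).trans (VEEH))
    have VHEF : μ sH sE sF = u3 • sH := (hsymm₁ sH sE sF).trans ((hsymm₂ sE sH sF).trans (VEFH))
    have VHEH : μ sH sE sH = (2*u3) • sE := (hsymm₁ sH sE sH).trans (VEHH)
    have VHFE : μ sH sF sE = u3 • sH := (hsymm₁ sH sF sE).trans ((hsymm₂ sF sH sE).trans ((hsymm₁ sF sE sH).trans (VEFH)))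
    have VHFF : μ sH sF sF = (0 : sl2C) := (hsymm₁ sH sF sF).trans ((hsymm₂ sF sH sF).trans (VFFH))
    have VHFH : μ sH sF sH = (2*u3) • sF := (hsymm₁ sH sF sH).trans (VFHH)
    have VHHE : μ sH sH sE = (2*u3) • sE := (hsymm₂ sH sH sE).trans ((hsymm₁ sH sE sH).trans (VEHH))
    have VHHF : μ sH sH sF = (2*u3) • sF := (hsymm₂ sH sH sF).trans ((hsymm₁ sH sF sH).trans (VFHH))
    refine ⟨u3/4, fun x y z => ?_⟩
    obtain ⟨xa, xb, xc, hx⟩ : ∃ p q r, x = p • sE + q • sF + r • sH := ⟨_, _, _, decomp x⟩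
    obtain ⟨ya, yb, yc, hy⟩ : ∃ p q r, y = p • sE + q • sF + r • sH := ⟨_, _, _, decomp y⟩
    obtain ⟨za, zb, zc, hz⟩ : ∃ p q r, z = p • sE + q • sF + r • sH := ⟨_, _, _, decomp z⟩
    subst hx hy hz
    refine ext3 ?_ ?_ ?_ <;>
    · simp only [hadd, hadd₂, hadd₃, hsmul, hsmul₂, hsmul₃,
        VEEE, VEEF, VEEH, VEFF, VEFH, VEHH, VFFF, VFFH, VFHH, VHHH,
        VEFE, VEHE, VEHF, VFEE, VFEF, VFEH, VFFE, VFHE, VFHF, VHEE, VHEF, VHEH, VHFE, VHFF, VHFH, VHHE, VHHF,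
        killing_formula,
        cA_add, cB_add, cC_add, cA_smul, cB_smul, cC_smul, cA_E, cB_E, cC_E,
        cA_F, cB_F, cC_F, cA_H, cB_H, cC_H, cA_zero, cB_zero, cC_zero,
        smul_zero, add_zero, zero_add, mul_zero, zero_mul, mul_one, one_mul]
      ring
  · exact J4_lemma
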